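/- Let (X,μ) be an infinite connected non-oriented weighted graph with bounded geometry and bounded row sums which is quasi-transitive: there is a finite partition of X such that for every pair x,y in the same class there is a bijection γ of X with γ(x) = y and μ(γ(a),γ(b)) = μ(a,b) for all a,b ∈ X. Fix p ∈ (0,1] and let ω be distributed as Bernoulli bond percolation on the edge set E(X) with parameter p. Then, almost surely, λ_s(Y^a_ω) := inf_{x∈X} r_ω(x) = R_μ. -/

import Mathlib

open Filter MeasureTheory ProbabilityTheory
open scoped ENNReal NNReal

/-- `n`-step weights (matrix powers) of a weight kernel `μ` on a countable set. -/
noncomputable def matPow {X : Type*} [DecidableEq X] (μ : X → X → ℝ≥0∞) :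
    ℕ → X → X → ℝ≥0∞
  | 0, x, y => if x = y then 1 else 0
  | n + 1, x, y => ∑' z, matPow μ n x z * μ z y

/-- `(X, μ)` has bounded row sums. -/
def bddRows {X : Type*} (μ : X → X → ℝ≥0∞) : Prop :=
  ∃ K : ℝ≥0∞, K ≠ ⊤ ∧ ∀ x, ∑' y, μ x y ≤ K

/-- `(X, μ)` is connected. -/
def connectedW {X : Type*} [DecidableEq X] (μ : X → X → ℝ≥0∞) : Prop :=
  ∀ x y, ∃ n, 0 < n ∧ 0 < matPow μ n x y

/-- `limsup_n (μ^{(n)}(x,y))^{1/n}`, the reciprocal of the convergence parameter. -/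
noncomputable def lsRoot {X : Type*} [DecidableEq X] (μ : X → X → ℝ≥0∞) (x y : X) : ℝ≥0∞ :=
  Filter.limsup (fun n : ℕ => matPow μ n x y ^ (n : ℝ)⁻¹) Filter.atTop

/-- The convergence parameter `R = 1 / limsup_n (μ^{(n)}(x,y))^{1/n}`. -/
noncomputable def convR {X : Type*} [DecidableEq X] (μ : X → X → ℝ≥0∞) (x y : X) : ℝ≥0∞ :=
  (lsRoot μ x y)⁻¹

open Classical in
/-- Restriction of a weight kernel to a subset (extended by `0`). -/
noncomputable def restrictW {X : Type*} (μ : X → X → ℝ≥0∞) (A : Set X) : X → X → ℝ≥0∞ :=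
  fun x y => if x ∈ A ∧ y ∈ A then μ x y else 0
/-- `e` is an edge of the weighted graph `(X, μ)`. -/
def IsEdgeW {X : Type*} (μ : X → X → ℝ≥0∞) (e : Sym2 X) : Prop :=
  ∃ x y : X, e = s(x, y) ∧ 0 < μ x y

open Classical in
/-- The weight kernel obtained from `μ` by keeping only the edges that are open in the
percolation configuration `c`. -/
noncomputable def percW {X : Type*} (μ : X → X → ℝ≥0∞)
    (c : {e : Sym2 X // IsEdgeW μ e} → Bool) : X → X → ℝ≥0∞ := fun x y =>
  if h : IsEdgeW μ s(x, y) then (if c ⟨s(x, y), h⟩ then μ x y else 0) else 0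

/-- The open cluster of `x` in the configuration `c`: all vertices reachable from `x`
through open edges. -/
def clusterW {X : Type*} [DecidableEq X] (μ : X → X → ℝ≥0∞)
    (c : {e : Sym2 X // IsEdgeW μ e} → Bool) (x : X) : Set X :=
  {y : X | ∃ n : ℕ, 0 < matPow (percW μ c) n x y}

/-- `(X, μ)` is non-oriented: `μ(x,y) > 0` iff `μ(y,x) > 0`. -/
def nonOrientedW {X : Type*} (μ : X → X → ℝ≥0∞) : Prop :=
  ∀ x y : X, 0 < μ x y ↔ 0 < μ y x

/-- `(X, μ)` has bounded geometry: uniformly bounded number of neighbours. -/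
def bddGeometryW {X : Type*} (μ : X → X → ℝ≥0∞) : Prop :=
  ∃ D : ℕ, ∀ x : X, ({y : X | 0 < μ x y}).Finite ∧ ({y : X | 0 < μ x y}).ncard ≤ D

/-- `(X, μ)` is quasi-transitive: a finite partition such that any two vertices in the
same class are exchanged by some `μ`-preserving bijection of `X`. -/
def quasiTransitiveW {X : Type*} (μ : X → X → ℝ≥0∞) : Prop :=
  ∃ (ι : Type) (_ : Finite ι) (cl : X → ι), ∀ x y : X, cl x = cl y →
    ∃ γ : X ≃ X, γ x = y ∧ ∀ a b : X, μ (γ a) (γ b) = μ a b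


section MatPowBasic
variable {X : Type*} [DecidableEq X]

lemma matPow_zero (μ : X → X → ℝ≥0∞) (x y : X) :
    matPow μ 0 x y = if x = y then 1 else 0 := rfl

lemma matPow_succ (μ : X → X → ℝ≥0∞) (n : ℕ) (x y : X) :
    matPow μ (n + 1) x y = ∑' z, matPow μ n x z * μ z y := rfl

lemma matPow_one (μ : X → X → ℝ≥0∞) (x y : X) : matPow μ 1 x y = μ x y := by
  rw [matPow_succ]
  rw [tsum_eq_single x (fun z hz => by simp [matPow_zero, Ne.symm hz])]
  simp [matPow_zero]

lemma matPow_mono {μ ν : X → X → ℝ≥0∞} (h : ∀ x y, μ x y ≤ ν x y) (n : ℕ) (x y : X) :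
    matPow μ n x y ≤ matPow ν n x y := by
  induction n generalizing y with
  | zero => simp [matPow_zero]
  | succ n ih =>
    rw [matPow_succ, matPow_succ]
    exact ENNReal.tsum_le_tsum fun z => mul_le_mul' (ih z) (h z y)

lemma matPow_add (μ : X → X → ℝ≥0∞) (m n : ℕ) (x y : X) :
    matPow μ (m + n) x y = ∑' z, matPow μ m x z * matPow μ n z y := by
  induction n generalizing y with
  | zero =>
    rw [Nat.add_zero]
    rw [tsum_eq_single y (fun z hz => by simp [matPow_zero, hz])]
    simp [matPow_zero]
  | succ n ih =>
    rw [show m + (n + 1) = (m + n) + 1 by omega, matPow_succ]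
    calc ∑' z, matPow μ (m + n) x z * μ z y
        = ∑' z, (∑' w, matPow μ m x w * matPow μ n w z) * μ z y := by
          simp_rw [ih]
      _ = ∑' z, ∑' w, matPow μ m x w * matPow μ n w z * μ z y := by
          simp_rw [ENNReal.tsum_mul_right]
      _ = ∑' w, ∑' z, matPow μ m x w * matPow μ n w z * μ z y := ENNReal.tsum_comm
      _ = ∑' w, matPow μ m x w * matPow μ (n + 1) w y := by
          refine tsum_congr fun w => ?_
          rw [matPow_succ, ← ENNReal.tsum_mul_left]
          simp_rw [mul_assoc]

lemma mul_matPow_le (μ : X → X → ℝ≥0∞) (m n : ℕ) (x z y : X) :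
    matPow μ m x z * matPow μ n z y ≤ matPow μ (m + n) x y := by
  rw [matPow_add]
  exact ENNReal.le_tsum z

lemma tsum_matPow_le {μ : X → X → ℝ≥0∞} {K : ℝ≥0∞} (hK : ∀ x, ∑' y, μ x y ≤ K)
    (n : ℕ) (x : X) : ∑' y, matPow μ n x y ≤ K ^ n := by
  induction n with
  | zero =>
    rw [pow_zero]
    rw [tsum_eq_single x (fun z hz => by simp [matPow_zero, Ne.symm hz])]
    simp [matPow_zero]
  | succ n ih =>
    calc ∑' y, matPow μ (n + 1) x y = ∑' y, ∑' z, matPow μ n x z * μ z y := rfl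
      _ = ∑' z, ∑' y, matPow μ n x z * μ z y := ENNReal.tsum_comm
      _ = ∑' z, matPow μ n x z * ∑' y, μ z y := by simp_rw [ENNReal.tsum_mul_left]
      _ ≤ ∑' z, matPow μ n x z * K := ENNReal.tsum_le_tsum fun z => mul_le_mul' le_rfl (hK z)
      _ = (∑' z, matPow μ n x z) * K := ENNReal.tsum_mul_right
      _ ≤ K ^ n * K := mul_le_mul' ih le_rfl
      _ = K ^ (n + 1) := (pow_succ K n).symm

lemma matPow_le_pow {μ : X → X → ℝ≥0∞} {K : ℝ≥0∞} (hK : ∀ x, ∑' y, μ x y ≤ K)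
    (n : ℕ) (x y : X) : matPow μ n x y ≤ K ^ n :=
  le_trans (ENNReal.le_tsum y) (tsum_matPow_le hK n x)

lemma matPow_equiv {μ : X → X → ℝ≥0∞} (γ : X ≃ X) (h : ∀ a b, μ (γ a) (γ b) = μ a b)
    (n : ℕ) (a b : X) : matPow μ n (γ a) (γ b) = matPow μ n a b := by
  induction n generalizing b with
  | zero => simp [matPow_zero, γ.injective.eq_iff]
  | succ n ih =>
    rw [matPow_succ, matPow_succ, ← Equiv.tsum_eq γ (fun z => matPow μ n (γ a) z * μ z (γ b))]
    exact tsum_congr fun w => by rw [ih, h]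

lemma matPow_succ_pos_iff {μ : X → X → ℝ≥0∞} {n : ℕ} {x y : X} :
    0 < matPow μ (n + 1) x y ↔ ∃ z, 0 < matPow μ n x z ∧ 0 < μ z y := by
  rw [matPow_succ, pos_iff_ne_zero, Ne, ENNReal.tsum_eq_zero]
  push_neg
  simp_rw [mul_ne_zero_iff, pos_iff_ne_zero]

lemma matPow_zero_pos_iff {μ : X → X → ℝ≥0∞} {x y : X} :
    0 < matPow μ 0 x y ↔ x = y := by
  rw [matPow_zero]; split <;> simp_all

lemma matPow_pos_symm {μ : X → X → ℝ≥0∞} (hno : nonOrientedW μ) {n : ℕ} {x y : X}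
    (h : 0 < matPow μ n x y) : 0 < matPow μ n y x := by
  induction n generalizing y with
  | zero => rw [matPow_zero_pos_iff] at h ⊢; exact h.symm
  | succ n ih =>
    obtain ⟨z, hz1, hz2⟩ := matPow_succ_pos_iff.mp h
    have h1 : 0 < matPow μ 1 y z := by rw [matPow_one]; exact (hno z y).mp hz2
    have h2 : 0 < matPow μ n z x := ih hz1
    calc (0:ℝ≥0∞) < matPow μ 1 y z * matPow μ n z x :=
      ENNReal.mul_pos h1.ne' h2.ne'
      _ ≤ matPow μ (1 + n) y x := mul_matPow_le μ 1 n y z x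
      _ = matPow μ (n + 1) y x := by rw [Nat.add_comm]

lemma exists_le_pow {M b : ℝ≥0∞} (hM : M ≠ ⊤) (hb : 1 < b) : ∃ N : ℕ, M ≤ b ^ N := by
  rcases eq_or_ne b ⊤ with rfl | hbt
  · exact ⟨1, by simp [le_top]⟩
  · lift b to ℝ≥0 using hbt
    lift M to ℝ≥0 using hM
    have hb' : 1 < b := by exact_mod_cast hb
    obtain ⟨N, hN⟩ := pow_unbounded_of_one_lt M hb'
    exact ⟨N, by exact_mod_cast hN.le⟩

lemma eventually_rpow_inv_le {M b : ℝ≥0∞} (hM : M ≠ ⊤) (hb : 1 < b) :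
    ∀ᶠ n : ℕ in atTop, M ^ (n : ℝ)⁻¹ ≤ b := by
  obtain ⟨N, hN⟩ := exists_le_pow hM hb
  filter_upwards [eventually_ge_atTop (max N 1)] with n hn
  have hn1 : 1 ≤ n := le_trans (le_max_right _ _) hn
  have hNn : N ≤ n := le_trans (le_max_left _ _) hn
  have hnR : (0:ℝ) < (n:ℝ) := by exact_mod_cast hn1
  calc M ^ (n : ℝ)⁻¹ ≤ (b ^ N) ^ (n : ℝ)⁻¹ :=
        ENNReal.rpow_le_rpow hN (by positivity)
    _ = b ^ ((N : ℝ) * (n : ℝ)⁻¹) := by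
        rw [← ENNReal.rpow_natCast b N, ← ENNReal.rpow_mul]
    _ ≤ b ^ (1 : ℝ) := by
        apply ENNReal.rpow_le_rpow_of_exponent_le hb.le
        rw [← div_eq_mul_inv, div_le_one hnR]
        exact_mod_cast hNn
    _ = b := ENNReal.rpow_one b

lemma limsup_root_le_max {v : ℕ → ℝ≥0∞} {K : ℝ≥0∞} (hvK : ∀ n, v n ≤ K ^ n) :
    Filter.limsup (fun n : ℕ => v n ^ (n : ℝ)⁻¹) Filter.atTop ≤ max K 1 := by
  apply Filter.limsup_le_of_le
  · isBoundedDefault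
  · filter_upwards [eventually_ge_atTop 1] with n hn
    have hn0 : ((n:ℝ)) ≠ 0 := by positivity
    calc v n ^ (n:ℝ)⁻¹ ≤ (K ^ n) ^ (n:ℝ)⁻¹ := ENNReal.rpow_le_rpow (hvK n) (by positivity)
      _ = K ^ ((n:ℝ) * (n:ℝ)⁻¹) := by rw [← ENNReal.rpow_natCast K n, ← ENNReal.rpow_mul]
      _ = K ^ (1:ℝ) := by rw [mul_inv_cancel₀ hn0]
      _ = K := ENNReal.rpow_one K
      _ ≤ max K 1 := le_max_left K 1

lemma rpow_inv_le_of_le_pow {v b : ℝ≥0∞} {n : ℕ} (hn : 1 ≤ n) (h : v ≤ b ^ n) :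
    v ^ (n:ℝ)⁻¹ ≤ b := by
  have hn0 : ((n:ℝ)) ≠ 0 := by positivity
  calc v ^ (n:ℝ)⁻¹ ≤ (b ^ n) ^ (n:ℝ)⁻¹ := ENNReal.rpow_le_rpow h (by positivity)
    _ = b ^ ((n:ℝ) * (n:ℝ)⁻¹) := by rw [← ENNReal.rpow_natCast b n, ← ENNReal.rpow_mul]
    _ = b := by rw [mul_inv_cancel₀ hn0, ENNReal.rpow_one]

lemma le_pow_of_rpow_inv_le {v b : ℝ≥0∞} {n : ℕ} (hn : 1 ≤ n) (h : v ^ (n:ℝ)⁻¹ ≤ b) :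
    v ≤ b ^ n := by
  have hn0 : ((n:ℝ)) ≠ 0 := by positivity
  calc v = (v ^ (n:ℝ)⁻¹) ^ ((n:ℝ)) := by
        rw [← ENNReal.rpow_mul, inv_mul_cancel₀ hn0, ENNReal.rpow_one]
    _ ≤ b ^ ((n:ℝ)) := ENNReal.rpow_le_rpow h (by positivity)
    _ = b ^ n := ENNReal.rpow_natCast b n

/-- The key comparison lemma: if `c * u n ≤ v (n + k)` with `0 < c < ⊤` and `v` grows at most
geometrically, then the limsup root of `u` is at most that of `v`. -/
lemma limsup_root_shift_le {u v : ℕ → ℝ≥0∞} {c : ℝ≥0∞} (hc0 : c ≠ 0) (hct : c ≠ ⊤)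
    (k : ℕ) (h : ∀ n, c * u n ≤ v (n + k)) {K : ℝ≥0∞} (hK : K ≠ ⊤)
    (hvK : ∀ n, v n ≤ K ^ n) :
    Filter.limsup (fun n : ℕ => u n ^ (n : ℝ)⁻¹) Filter.atTop ≤
      Filter.limsup (fun n : ℕ => v n ^ (n : ℝ)⁻¹) Filter.atTop := by
  set W := Filter.limsup (fun n : ℕ => v n ^ (n : ℝ)⁻¹) Filter.atTop with hW
  have hWtop : W ≠ ⊤ := by
    refine ne_top_of_le_ne_top ?_ (limsup_root_le_max hvK)
    simp [lt_top_iff_ne_top.symm, hK.lt_top]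
  refine le_of_forall_gt_imp_ge_of_dense fun b hb => ?_
  -- replace b by b2 := min b (W + 1), which is finite
  set b2 := min b (W + 1) with hb2def
  have hWb2 : W < b2 := lt_min hb (ENNReal.lt_add_right hWtop one_ne_zero)
  have hb2top : b2 ≠ ⊤ := by
    refine ne_top_of_le_ne_top ?_ (min_le_right b (W + 1))
    exact ENNReal.add_ne_top.mpr ⟨hWtop, ENNReal.one_ne_top⟩
  obtain ⟨b1, hb1W, hb1b2⟩ := exists_between hWb2
  have hb10 : b1 ≠ 0 := by
    intro h0; rw [h0] at hb1W; exact (not_lt_bot (lt_of_le_of_lt bot_le hb1W)).elim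
  have hb1top : b1 ≠ ⊤ := ne_top_of_lt (lt_of_lt_of_le hb1b2 (le_top))
  have hq : 1 < b2 / b1 := by
    rw [ENNReal.lt_div_iff_mul_lt (Or.inl hb10) (Or.inl hb1top), one_mul]
    exact hb1b2
  set M := c⁻¹ * b1 ^ k with hMdef
  have hMtop : M ≠ ⊤ := by
    apply ENNReal.mul_ne_top (ENNReal.inv_ne_top.mpr hc0)
    exact ENNReal.pow_ne_top hb1top
  have hev1 : ∀ᶠ n : ℕ in atTop, v n ^ (n:ℝ)⁻¹ < b1 :=
    Filter.eventually_lt_of_limsup_lt hb1W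
  have hev2 : ∀ᶠ n : ℕ in atTop, M ^ (n:ℝ)⁻¹ ≤ b2 / b1 := eventually_rpow_inv_le hMtop hq
  obtain ⟨N0, hN0⟩ := Filter.eventually_atTop.mp hev1
  have key : ∀ᶠ n : ℕ in atTop, u n ^ (n:ℝ)⁻¹ ≤ b2 := by
    filter_upwards [eventually_ge_atTop (max N0 1), hev2] with n hn hMn
    have hn1 : 1 ≤ n := le_trans (le_max_right _ _) hn
    have hnN0 : N0 ≤ n := le_trans (le_max_left _ _) hn
    have hvb : v (n + k) ≤ b1 ^ (n + k) :=
      le_pow_of_rpow_inv_le (by omega) (hN0 (n + k) (by omega)).le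
    have hu : u n ≤ M * b1 ^ n := by
      have h1 : u n ≤ c⁻¹ * v (n + k) := by
        calc u n = c⁻¹ * (c * u n) := by
              rw [← mul_assoc, ENNReal.inv_mul_cancel hc0 hct, one_mul]
          _ ≤ c⁻¹ * v (n + k) := mul_le_mul' le_rfl (h n)
      calc u n ≤ c⁻¹ * v (n + k) := h1
        _ ≤ c⁻¹ * b1 ^ (n + k) := mul_le_mul' le_rfl hvb
        _ = M * b1 ^ n := by rw [hMdef, pow_add, mul_comm (b1 ^ n), mul_assoc]
    calc u n ^ (n:ℝ)⁻¹ ≤ (M * b1 ^ n) ^ (n:ℝ)⁻¹ := ENNReal.rpow_le_rpow hu (by positivity)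
      _ = M ^ (n:ℝ)⁻¹ * (b1 ^ n) ^ (n:ℝ)⁻¹ := ENNReal.mul_rpow_of_nonneg _ _ (by positivity)
      _ ≤ (b2 / b1) * b1 := by
          refine mul_le_mul' hMn (rpow_inv_le_of_le_pow hn1 le_rfl)
      _ = b2 := ENNReal.div_mul_cancel hb10 hb1top
  calc Filter.limsup (fun n : ℕ => u n ^ (n : ℝ)⁻¹) Filter.atTop ≤ b2 :=
        Filter.limsup_le_of_le (by isBoundedDefault) key
    _ ≤ b := min_le_left _ _

/-- Frequent lower bound: for a supermultiplicative sequence, each root is below the limsup. -/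
lemma le_limsup_root_of_supmul {v : ℕ → ℝ≥0∞} (hsm : ∀ a b, v a * v b ≤ v (a + b))
    {m : ℕ} (hm : 0 < m) :
    v m ^ (m:ℝ)⁻¹ ≤ Filter.limsup (fun n : ℕ => v n ^ (n : ℝ)⁻¹) Filter.atTop := by
  have hpow : ∀ j : ℕ, v m ^ (j + 1) ≤ v ((j + 1) * m) := by
    intro j
    induction j with
    | zero => simp
    | succ j ih =>
      calc v m ^ (j + 2) = v m ^ (j + 1) * v m := by ring
        _ ≤ v ((j + 1) * m) * v m := mul_le_mul' ih le_rfl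
        _ ≤ v ((j + 1) * m + m) := hsm _ _
        _ = v ((j + 2) * m) := by ring_nf
  apply Filter.le_limsup_of_frequently_le
  · rw [Filter.frequently_atTop]
    intro N
    refine ⟨(N + 1) * m, by nlinarith, ?_⟩
    have h1 : (v m ^ (N + 1)) ^ (((N + 1) * m : ℕ) : ℝ)⁻¹ ≤
        v ((N + 1) * m) ^ (((N + 1) * m : ℕ) : ℝ)⁻¹ :=
      ENNReal.rpow_le_rpow (hpow N) (by positivity)
    refine le_trans (le_of_eq ?_) h1
    have hmR : ((m:ℝ)) ≠ 0 := by positivity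
    rw [← ENNReal.rpow_natCast (v m) (N + 1), ← ENNReal.rpow_mul]
    congr 1
    have hc : (((N + 1) * m : ℕ) : ℝ) = (((N + 1) : ℕ) : ℝ) * (m : ℝ) := by push_cast; ring
    rw [hc, mul_inv, ← mul_assoc, mul_inv_cancel₀ (by positivity), one_mul]
  · exact Filter.isBoundedUnder_of ⟨⊤, fun n => le_top⟩

lemma limsup_root_le_iSup (v : ℕ → ℝ≥0∞) :
    Filter.limsup (fun n : ℕ => v n ^ (n : ℝ)⁻¹) Filter.atTop ≤
      ⨆ m : ℕ, v (m + 1) ^ (((m + 1 : ℕ)) : ℝ)⁻¹ := by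
  apply Filter.limsup_le_of_le (by isBoundedDefault)
  filter_upwards [eventually_ge_atTop 1] with n hn
  obtain ⟨m, rfl⟩ : ∃ m, n = m + 1 := ⟨n - 1, by omega⟩
  exact le_iSup (fun m : ℕ => v (m + 1) ^ (((m + 1 : ℕ)) : ℝ)⁻¹) m

end MatPowBasic

section Graph
variable {X : Type*} [DecidableEq X]

lemma lsRoot_mono {μ ν : X → X → ℝ≥0∞} (h : ∀ x y, μ x y ≤ ν x y) (x y : X) :
    lsRoot μ x y ≤ lsRoot ν x y := by
  exact Filter.limsup_le_limsup (Filter.Eventually.of_forall fun n =>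
      ENNReal.rpow_le_rpow (matPow_mono h n x y) (by positivity))

lemma lsRoot_le_right {μ : X → X → ℝ≥0∞} {K : ℝ≥0∞} (hK : K ≠ ⊤)
    (hrows : ∀ x, ∑' y, μ x y ≤ K) {y z : X} {l : ℕ} (hl : 0 < matPow μ l y z) (x : X) :
    lsRoot μ x y ≤ lsRoot μ x z := by
  refine limsup_root_shift_le (c := matPow μ l y z) hl.ne'
    (((matPow_le_pow hrows l y z).trans_lt (ENNReal.pow_lt_top hK.lt_top)).ne) l
    (fun n => ?_) hK (fun n => matPow_le_pow hrows n x z)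
  rw [mul_comm]
  exact mul_matPow_le μ n l x y z

lemma lsRoot_le_left {μ : X → X → ℝ≥0∞} {K : ℝ≥0∞} (hK : K ≠ ⊤)
    (hrows : ∀ x, ∑' y, μ x y ≤ K) {x z : X} {l : ℕ} (hl : 0 < matPow μ l z x) (y : X) :
    lsRoot μ x y ≤ lsRoot μ z y := by
  refine limsup_root_shift_le (c := matPow μ l z x) hl.ne'
    (((matPow_le_pow hrows l z x).trans_lt (ENNReal.pow_lt_top hK.lt_top)).ne) l
    (fun n => ?_) hK (fun n => matPow_le_pow hrows n z y)
  rw [Nat.add_comm]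
  exact mul_matPow_le μ l n z x y

lemma lsRoot_const {μ : X → X → ℝ≥0∞} {K : ℝ≥0∞} (hK : K ≠ ⊤)
    (hrows : ∀ x, ∑' y, μ x y ≤ K) (hconn : connectedW μ) (x y z w : X) :
    lsRoot μ x y = lsRoot μ z w := by
  have step : ∀ a b c d : X, lsRoot μ a b ≤ lsRoot μ c d := by
    intro a b c d
    obtain ⟨l, -, hl⟩ := hconn b d
    obtain ⟨k, -, hk⟩ := hconn c a
    exact le_trans (lsRoot_le_right hK hrows hl a) (lsRoot_le_left hK hrows hk d)
  exact le_antisymm (step x y z w) (step z w x y)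

lemma le_lsRoot_diag {μ : X → X → ℝ≥0∞} (x : X) {m : ℕ} (hm : 0 < m) :
    matPow μ m x x ^ (m : ℝ)⁻¹ ≤ lsRoot μ x x :=
  le_limsup_root_of_supmul (fun a b => mul_matPow_le μ a b x x x) hm

lemma lsRoot_diag_le_iSup (μ : X → X → ℝ≥0∞) (x : X) :
    lsRoot μ x x ≤ ⨆ m : ℕ, matPow μ (m + 1) x x ^ (((m + 1 : ℕ)) : ℝ)⁻¹ :=
  limsup_root_le_iSup _

/-- The neighbours of `x`, as a finset. -/
noncomputable def nbrF {μ : X → X → ℝ≥0∞} (hbg : bddGeometryW μ) (x : X) : Finset X :=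
  ((hbg.choose_spec x).1).toFinset

lemma mem_nbrF {μ : X → X → ℝ≥0∞} (hbg : bddGeometryW μ) {x w : X} :
    w ∈ nbrF hbg x ↔ 0 < μ x w := by
  simp [nbrF, Set.Finite.mem_toFinset]

lemma card_nbrF {μ : X → X → ℝ≥0∞} (hbg : bddGeometryW μ) (x : X) :
    (nbrF hbg x).card ≤ hbg.choose := by
  have h := (hbg.choose_spec x).2
  have hc : ((nbrF hbg x : Finset X) : Set X) = {y | 0 < μ x y} := Set.Finite.coe_toFinset _
  rw [← Set.ncard_coe_finset, hc]
  exact h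

/-- The ball of radius `N` around `x`, as a finset. -/
noncomputable def ballWF {μ : X → X → ℝ≥0∞} (hbg : bddGeometryW μ) (x : X) : ℕ → Finset X
  | 0 => {x}
  | N + 1 => ballWF hbg x N ∪ (ballWF hbg x N).biUnion (nbrF hbg)

lemma mem_ballWF {μ : X → X → ℝ≥0∞} (hbg : bddGeometryW μ) {x : X} {N : ℕ} {w : X} :
    w ∈ ballWF hbg x N ↔ ∃ i ≤ N, 0 < matPow μ i x w := by
  induction N generalizing w with
  | zero =>
    simp only [ballWF, Finset.mem_singleton]
    constructor
    · rintro rfl; exact ⟨0, le_rfl, by rw [matPow_zero_pos_iff]⟩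
    · rintro ⟨i, hi, hpos⟩
      interval_cases i
      exact (matPow_zero_pos_iff.mp hpos).symm
  | succ N ih =>
    simp only [ballWF, Finset.mem_union, Finset.mem_biUnion, ih, mem_nbrF]
    constructor
    · rintro (⟨i, hi, hpos⟩ | ⟨z, ⟨i, hi, hposz⟩, hμ⟩)
      · exact ⟨i, by omega, hpos⟩
      · refine ⟨i + 1, by omega, matPow_succ_pos_iff.mpr ⟨z, hposz, hμ⟩⟩
    · rintro ⟨i, hi, hpos⟩
      rcases Nat.lt_or_ge i (N + 1) with h | h
      · exact Or.inl ⟨i, by omega, hpos⟩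
      · have : i = N + 1 := by omega
        subst this
        obtain ⟨z, hz1, hz2⟩ := matPow_succ_pos_iff.mp hpos
        exact Or.inr ⟨z, ⟨N, le_rfl, hz1⟩, hz2⟩

lemma self_mem_ballWF {μ : X → X → ℝ≥0∞} (hbg : bddGeometryW μ) (x : X) (N : ℕ) :
    x ∈ ballWF hbg x N :=
  mem_ballWF hbg |>.mpr ⟨0, Nat.zero_le N, by rw [matPow_zero_pos_iff]⟩

lemma card_ballWF {μ : X → X → ℝ≥0∞} (hbg : bddGeometryW μ) (x : X) (N : ℕ) :
    (ballWF hbg x N).card ≤ (hbg.choose + 1) ^ N := by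
  induction N with
  | zero => simp [ballWF]
  | succ N ih =>
    calc (ballWF (μ := μ) hbg x (N + 1)).card
        ≤ (ballWF (μ := μ) hbg x N).card + ((ballWF (μ := μ) hbg x N).biUnion (nbrF hbg)).card :=
          Finset.card_union_le _ _
      _ ≤ (ballWF (μ := μ) hbg x N).card + ∑ z ∈ ballWF (μ := μ) hbg x N, (nbrF hbg z).card :=
          add_le_add le_rfl (Finset.card_biUnion_le)
      _ ≤ (ballWF (μ := μ) hbg x N).card + (ballWF (μ := μ) hbg x N).card * hbg.choose := by
          refine add_le_add le_rfl ?_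
          calc ∑ z ∈ ballWF (μ := μ) hbg x N, (nbrF hbg z).card
              ≤ ∑ _z ∈ ballWF (μ := μ) hbg x N, hbg.choose :=
                Finset.sum_le_sum fun z _ => card_nbrF hbg z
            _ = (ballWF (μ := μ) hbg x N).card * hbg.choose := by
                rw [Finset.sum_const, smul_eq_mul]
      _ = (ballWF (μ := μ) hbg x N).card * (hbg.choose + 1) := by ring
      _ ≤ (hbg.choose + 1) ^ N * (hbg.choose + 1) := by
          exact Nat.mul_le_mul_right _ ih
      _ = (hbg.choose + 1) ^ (N + 1) := (pow_succ _ _).symm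

lemma ballWF_symm {μ : X → X → ℝ≥0∞} (hno : nonOrientedW μ) (hbg : bddGeometryW μ)
    {x w : X} {N : ℕ} (h : w ∈ ballWF hbg x N) : x ∈ ballWF hbg w N := by
  rw [mem_ballWF] at h ⊢
  obtain ⟨i, hi, hpos⟩ := h
  exact ⟨i, hi, matPow_pos_symm hno hpos⟩

end Graph

section Restrict
variable {X : Type*} [DecidableEq X]

lemma restrictW_le (μ : X → X → ℝ≥0∞) (A : Set X) (x y : X) : restrictW μ A x y ≤ μ x y := by
  unfold restrictW
  split
  · exact le_rfl
  · exact zero_le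

lemma restrictW_rows {μ : X → X → ℝ≥0∞} {K : ℝ≥0∞} (hrows : ∀ x, ∑' y, μ x y ≤ K)
    (A : Set X) (x : X) : ∑' y, restrictW μ A x y ≤ K :=
  le_trans (ENNReal.tsum_le_tsum fun y => restrictW_le μ A x y) (hrows x)

lemma percW_le (μ : X → X → ℝ≥0∞) (c : {e : Sym2 X // IsEdgeW μ e} → Bool) (x y : X) :
    percW μ c x y ≤ μ x y := by
  unfold percW
  split
  · split
    · exact le_rfl
    · exact zero_le
  · exact zero_le

lemma restrict_le_percW {μ : X → X → ℝ≥0∞} {c : {e : Sym2 X // IsEdgeW μ e} → Bool}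
    {A : Set X} (hopen : ∀ e : {e : Sym2 X // IsEdgeW μ e}, (∀ v ∈ e.val, v ∈ A) → c e = true)
    (x y : X) : restrictW μ A x y ≤ percW μ c x y := by
  unfold restrictW
  split
  case isFalse => exact zero_le
  case isTrue hxy =>
    rcases eq_or_ne (μ x y) 0 with h0 | h0
    · rw [h0]; exact zero_le
    · have hE : IsEdgeW μ s(x, y) := ⟨x, y, rfl, pos_iff_ne_zero.mpr h0⟩
      have hmem : ∀ v ∈ (⟨s(x, y), hE⟩ : {e : Sym2 X // IsEdgeW μ e}).val, v ∈ A := by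
        intro v hv
        rcases Sym2.mem_iff.mp hv with rfl | rfl
        · exact hxy.1
        · exact hxy.2
      have := hopen ⟨s(x, y), hE⟩ hmem
      unfold percW
      rw [dif_pos hE, if_pos this]

/-- If `A` contains the `N`-ball around `x`, the restricted `n`-step weights from `x`
agree with the unrestricted ones up to time `N`. -/
lemma matPow_restrict_eq {μ : X → X → ℝ≥0∞} {A : Set X} {x : X} {N : ℕ}
    (hA : ∀ w, (∃ i ≤ N, 0 < matPow μ i x w) → w ∈ A) :
    ∀ n, n ≤ N → ∀ y, matPow (restrictW μ A) n x y = matPow μ n x y := by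
  intro n
  induction n with
  | zero => intro _ y; rfl
  | succ n ih =>
    intro hn y
    rw [matPow_succ, matPow_succ]
    by_cases hy : y ∈ A
    · refine tsum_congr fun z => ?_
      rw [ih (by omega) z]
      rcases eq_or_ne (matPow μ n x z) 0 with h0 | h0
      · rw [h0, zero_mul, zero_mul]
      · have hzA : z ∈ A := hA z ⟨n, by omega, pos_iff_ne_zero.mpr h0⟩
        congr 1
        unfold restrictW
        rw [if_pos ⟨hzA, hy⟩]
    · have hL : ∑' z, matPow (restrictW μ A) n x z * restrictW μ A z y = 0 := by
        rw [ENNReal.tsum_eq_zero]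
        intro z
        have : restrictW μ A z y = 0 := by
          unfold restrictW
          rw [if_neg (fun h => hy h.2)]
        rw [this, mul_zero]
      have hR : ∑' z, matPow μ n x z * μ z y = 0 := by
        by_contra hne
        have hpos : 0 < matPow μ (n + 1) x y := by
          rw [matPow_succ]; exact pos_iff_ne_zero.mpr hne
        exact hy (hA y ⟨n + 1, hn, hpos⟩)
      rw [hL, hR]

end Restrict

section Edges
variable {X : Type*} [DecidableEq X]

lemma edgeSet_finite (μ : X → X → ℝ≥0∞) (A : Finset X) :
    {e : {e : Sym2 X // IsEdgeW μ e} | ∀ v ∈ (e : Sym2 X), v ∈ A}.Finite := by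
  refine Set.Finite.of_finite_image (f := fun e => (e : Sym2 X)) ?_
    Subtype.coe_injective.injOn
  · apply Set.Finite.subset
      (Set.Finite.image (fun p : X × X => s(p.1, p.2)) ((A.finite_toSet).prod (A.finite_toSet)))
    rintro s ⟨e, he, rfl⟩
    obtain ⟨u, v, huv, hpos⟩ := e.2
    refine ⟨(u, v), ⟨?_, ?_⟩, huv.symm⟩
    · exact he u (by rw [huv]; exact Sym2.mem_mk_left u v)
    · exact he v (by rw [huv]; exact Sym2.mem_mk_right u v)

/-- The set of edges with both endpoints in the finset `A`, as a finset. -/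
noncomputable def edgesIn (μ : X → X → ℝ≥0∞) (A : Finset X) :
    Finset {e : Sym2 X // IsEdgeW μ e} :=
  (edgeSet_finite μ A).toFinset

lemma mem_edgesIn {μ : X → X → ℝ≥0∞} {A : Finset X} {e : {e : Sym2 X // IsEdgeW μ e}} :
    e ∈ edgesIn μ A ↔ ∀ v ∈ (e : Sym2 X), v ∈ A := by
  simp [edgesIn, Set.Finite.mem_toFinset]

lemma card_edgesIn (μ : X → X → ℝ≥0∞) (A : Finset X) :
    (edgesIn μ A).card ≤ A.card * A.card := by
  have h : (edgesIn μ A).card ≤ ((A ×ˢ A).image (fun p : X × X => s(p.1, p.2))).card := by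
    refine Finset.card_le_card_of_injOn (fun e => (e : Sym2 X)) ?_
      Subtype.coe_injective.injOn
    · intro e he
      rw [Finset.mem_coe, mem_edgesIn] at he
      obtain ⟨u, v, huv, hpos⟩ := e.2
      refine Finset.mem_image.mpr ⟨(u, v), Finset.mem_product.mpr ⟨?_, ?_⟩, huv.symm⟩
      · exact he u (by rw [huv]; exact Sym2.mem_mk_left u v)
      · exact he v (by rw [huv]; exact Sym2.mem_mk_right u v)
  calc (edgesIn μ A).card ≤ ((A ×ˢ A).image (fun p : X × X => s(p.1, p.2))).card := h
    _ ≤ (A ×ˢ A).card := Finset.card_image_le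
    _ = A.card * A.card := Finset.card_product A A

/-- Greedy construction of infinitely many centres in `C` with pairwise disjoint `N`-balls. -/
lemma exists_ball_seq {μ : X → X → ℝ≥0∞} (hno : nonOrientedW μ) (hbg : bddGeometryW μ)
    {C : Set X} (hC : C.Infinite) (N : ℕ) :
    ∃ y : ℕ → X, (∀ i, y i ∈ C) ∧
      ∀ i j, i < j → Disjoint (ballWF hbg (y i) N) (ballWF hbg (y j) N) := by
  have step : ∀ S : Finset X, ∃ z, z ∈ C ∧ ∀ w ∈ ballWF hbg z N, w ∉ S := by
    intro S
    obtain ⟨z, hz⟩ := (hC.diff (S.biUnion (fun w => ballWF hbg w N)).finite_toSet).nonempty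
    refine ⟨z, hz.1, fun w hw hwS => hz.2 ?_⟩
    exact Finset.mem_coe.mpr (Finset.mem_biUnion.mpr ⟨w, hwS, ballWF_symm hno hbg hw⟩)
  choose f hfC hfdisj using step
  let g : ℕ → Finset X := fun n =>
    Nat.rec (∅ : Finset X) (fun _ acc => acc ∪ ballWF hbg (f acc) N) n
  have hg_succ : ∀ n, g (n + 1) = g n ∪ ballWF hbg (f (g n)) N := fun n => rfl
  have hg_mono : ∀ i j, i ≤ j → g i ⊆ g j := by
    intro i j hij
    induction j with
    | zero => cases Nat.le_zero.mp hij; exact subset_rfl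
    | succ j ihj =>
      rcases Nat.lt_or_ge i (j + 1) with h | h
      · exact (ihj (by omega)).trans (by rw [hg_succ]; exact Finset.subset_union_left)
      · have : i = j + 1 := by omega
        subst this; exact subset_rfl
  refine ⟨fun n => f (g n), fun i => hfC (g i), fun i j hij => ?_⟩
  rw [Finset.disjoint_left]
  intro w hwi hwj
  have h1 : w ∈ g (i + 1) := by
    rw [hg_succ]; exact Finset.mem_union_right _ hwi
  have h2 : w ∈ g j := hg_mono (i + 1) j (by omega) h1
  exact hfdisj (g j) w hwj h2

end Edges

lemma measurableSet_pi_bool {ι : Type*} [Finite ι] (s : Set (ι → Bool)) : MeasurableSet s := by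
  have hsing : ∀ h : ι → Bool, MeasurableSet ({h} : Set (ι → Bool)) := by
    intro h
    have heq : ({h} : Set (ι → Bool)) = ⋂ i, (fun g : ι → Bool => g i) ⁻¹' {h i} := by
      ext g
      simp [funext_iff, eq_comm]
    rw [heq]
    exact MeasurableSet.iInter fun i => (measurable_pi_apply i) (measurableSet_singleton (h i))
  have hfin : s.Finite := Set.toFinite s
  rw [← Set.biUnion_of_singleton s]
  exact MeasurableSet.biUnion hfin.countable fun b _ => hsing b

/-- Theorem 7.1 (2): for a quasi-transitive infinite graph and any
`p ∈ (0,1]`, the strong critical parameter of the Bernoulli(`p`)-percolated graph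
`λ_s(Y^a_ω) = inf_x r_ω(x)` equals `R_μ` almost surely. -/
theorem percolation_quasiTransitive_strong_critical_parameter
    {X : Type*} [Countable X] [Infinite X] [DecidableEq X]
    (μ : X → X → ℝ≥0∞) (hbdd : bddRows μ) (hconn : connectedW μ)
    (hno : nonOrientedW μ) (hbg : bddGeometryW μ) (hqt : quasiTransitiveW μ)
    (p : ℝ≥0∞) (hp0 : 0 < p) (hp1 : p ≤ 1)
    {Ω : Type*} [MeasureSpace Ω] [IsProbabilityMeasure (ℙ : Measure Ω)]
    (Y : Ω → {e : Sym2 X // IsEdgeW μ e} → Bool)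
    (hmeas : ∀ e, Measurable fun a => Y a e)
    (hindep : iIndepFun
      (fun (e : {e : Sym2 X // IsEdgeW μ e}) a => Y a e) ℙ)
    (hber : ∀ e, ℙ {a | Y a e = true} = p) :
    ∀ᵐ a ∂ℙ, ∀ x y : X,
      (⨅ z : X, convR (percW μ (Y a)) z z) = convR μ x y := by
  classical
  obtain ⟨K, hKtop, hrows⟩ := hbdd
  obtain ⟨ι, hι, cl, hcl⟩ := hqt
  haveI := hι
  -- an infinite class
  obtain ⟨c0, hc0⟩ := Finite.exists_infinite_fiber cl
  have hCinf : (cl ⁻¹' {c0}).Infinite := Set.infinite_coe_iff.mp hc0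
  obtain ⟨x₀, hx₀⟩ := hCinf.nonempty
  -- events
  set Op : Finset {e : Sym2 X // IsEdgeW μ e} → Set Ω := fun S => ⋂ e ∈ S, (fun a => Y a e) ⁻¹' {true} with hOpdef
  have hOpMeas : ∀ S, MeasurableSet (Op S) := by
    intro S
    exact MeasurableSet.biInter S.countable_toSet fun e _ =>
      (hmeas e) (measurableSet_singleton true)
  have hOpMem : ∀ S a, a ∈ Op S ↔ ∀ e ∈ S, Y a e = true := by
    intro S a; simp [hOpdef]
  have hOpProb : ∀ S : Finset {e : Sym2 X // IsEdgeW μ e}, ℙ (Op S) = p ^ S.card := by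
    intro S
    have h := hindep.meas_biInter (S := S)
      (s := fun e => (fun a => Y a e) ⁻¹' ({true} : Set Bool))
      (fun e _ => ⟨{true}, measurableSet_singleton true, rfl⟩)
    rw [hOpdef]
    rw [h]
    have : ∀ e : {e : Sym2 X // IsEdgeW μ e}, ℙ ((fun a => Y a e) ⁻¹' ({true} : Set Bool)) = p := by
      intro e
      exact hber e
    rw [Finset.prod_congr rfl (fun e _ => this e), Finset.prod_const]
  -- per-radius construction
  set D := hbg.choose with hDdef
  have hyseq : ∀ m : ℕ, ∃ y : ℕ → X, (∀ i, y i ∈ cl ⁻¹' {c0}) ∧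
      ∀ i j, i < j → Disjoint (ballWF hbg (y i) (m + 1)) (ballWF hbg (y j) (m + 1)) :=
    fun m => exists_ball_seq hno hbg hCinf (m + 1)
  choose ym hymC hymD using hyseq
  set S : ℕ → ℕ → Finset {e : Sym2 X // IsEdgeW μ e} := fun m i => edgesIn μ (ballWF hbg (ym m i) (m + 1)) with hSdef
  have hSdisj : ∀ m i j, i < j → Disjoint (S m i) (S m j) := by
    intro m i j hij
    rw [Finset.disjoint_left]
    intro e hei hej
    rw [hSdef] at hei hej
    simp only [mem_edgesIn] at hei hej
    obtain ⟨u, v, huv, hpos⟩ := e.2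
    have hu1 : u ∈ ballWF hbg (ym m i) (m + 1) := hei u (by rw [huv]; exact Sym2.mem_mk_left u v)
    have hu2 : u ∈ ballWF hbg (ym m j) (m + 1) := hej u (by rw [huv]; exact Sym2.mem_mk_left u v)
    exact (Finset.disjoint_left.mp (hymD m i j hij)) hu1 hu2
  set q : ℕ → ℝ≥0∞ := fun m => p ^ (((D + 1) ^ (m + 1)) * ((D + 1) ^ (m + 1))) with hqdef
  have hq0 : ∀ m, q m ≠ 0 := fun m => pow_ne_zero _ hp0.ne'
  have hqle : ∀ m i, q m ≤ ℙ (Op (S m i)) := by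
    intro m i
    rw [hOpProb]
    apply pow_le_pow_of_le_one (zero_le (a := p)) hp1
    calc (S m i).card ≤ (ballWF hbg (ym m i) (m + 1)).card * (ballWF hbg (ym m i) (m + 1)).card :=
          card_edgesIn μ _
      _ ≤ ((D + 1) ^ (m + 1)) * ((D + 1) ^ (m + 1)) :=
          Nat.mul_le_mul (card_ballWF hbg _ _) (card_ballWF hbg _ _)
  -- probability that no copy is fully open is zero
  have hGzero : ∀ m : ℕ, ℙ (⋂ i : ℕ, (Op (S m i))ᶜ) = 0 := by
    intro m
    have hind : ∀ N : ℕ, ℙ (⋂ i ∈ Finset.range N, (Op (S m i))ᶜ) ≤ (1 - q m) ^ N := by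
      intro N
      induction N with
      | zero => simp
      | succ N ih =>
        have hdisj : Disjoint ((Finset.range N).biUnion (S m)) (S m N) := by
          rw [Finset.disjoint_left]
          intro e he heN
          obtain ⟨i, hi, hei⟩ := Finset.mem_biUnion.mp he
          exact (Finset.disjoint_left.mp (hSdisj m i N (Finset.mem_range.mp hi))) hei heN
        have hIF := hindep.indepFun_finset ((Finset.range N).biUnion (S m)) (S m N) hdisj hmeas
        set g1 : Ω → (↥((Finset.range N).biUnion (S m)) → Bool) :=
          fun a e => Y a ↑e with hg1
        set g2 : Ω → (↥(S m N) → Bool) := fun a e => Y a ↑e with hg2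
        set B1 : Set (↥((Finset.range N).biUnion (S m)) → Bool) :=
          {h | ∀ i ∈ Finset.range N,
            ¬ ∀ e : ↥((Finset.range N).biUnion (S m)),
              ((e : {e : Sym2 X // IsEdgeW μ e}) ∈ S m i) → h e = true} with hB1
        set B2 : Set (↥(S m N) → Bool) := {h | ∀ e, h e = true} with hB2
        have e1 : g1 ⁻¹' B1 = ⋂ i ∈ Finset.range N, (Op (S m i))ᶜ := by
          ext a
          simp only [Set.mem_preimage, hB1, Set.mem_setOf_eq, Set.mem_iInter,
            Set.mem_compl_iff, hg1]
          refine forall_congr' fun i => forall_congr' fun hi => not_congr ?_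
          constructor
          · intro h
            exact (hOpMem (S m i) a).mpr fun e he => h ⟨e, Finset.mem_biUnion.mpr ⟨i, hi, he⟩⟩ he
          · intro h e he
            exact (hOpMem (S m i) a).mp h ↑e he
        have e2 : g2 ⁻¹' B2 = Op (S m N) := by
          ext a
          simp only [Set.mem_preimage, hB2, Set.mem_setOf_eq, hg2]
          rw [hOpMem]
          constructor
          · intro h e he
            exact h ⟨e, he⟩
          · intro h e
            exact h ↑e e.2
        have hmain : ℙ (g1 ⁻¹' B1 ∩ g2 ⁻¹' B2ᶜ) = ℙ (g1 ⁻¹' B1) * ℙ (g2 ⁻¹' B2ᶜ) :=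
          hIF.measure_inter_preimage_eq_mul B1 B2ᶜ (measurableSet_pi_bool _)
            (measurableSet_pi_bool _)
        have hstep : ℙ (⋂ i ∈ Finset.range (N + 1), (Op (S m i))ᶜ) =
            ℙ (g1 ⁻¹' B1) * ℙ (g2 ⁻¹' B2ᶜ) := by
          rw [← hmain, Set.preimage_compl, e1, e2]
          congr 1
          rw [Finset.range_add_one, Finset.set_biInter_insert, Set.inter_comm]
        rw [hstep]
        have hcompl : ℙ (g2 ⁻¹' B2ᶜ) ≤ 1 - q m := by
          rw [Set.preimage_compl, e2, prob_compl_eq_one_sub (hOpMeas (S m N))]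
          exact tsub_le_tsub_left (hqle m N) 1
        calc ℙ (g1 ⁻¹' B1) * ℙ (g2 ⁻¹' B2ᶜ) ≤ (1 - q m) ^ N * (1 - q m) := by
              refine mul_le_mul' ?_ hcompl
              rw [e1]; exact ih
          _ = (1 - q m) ^ (N + 1) := (pow_succ _ _).symm
    have hr : 1 - q m < 1 := ENNReal.sub_lt_self ENNReal.one_ne_top one_ne_zero (hq0 m)
    refine le_antisymm ?_ zero_le
    refine ge_of_tendsto' (ENNReal.tendsto_pow_atTop_nhds_zero_of_lt_one hr) fun N => ?_
    refine le_trans (measure_mono ?_) (hind N)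
    intro a ha
    exact Set.mem_iInter₂.mpr fun i _ => Set.mem_iInter.mp ha i
  -- the a.s. event
  set Ω₀ : Set Ω := ⋂ m : ℕ, ⋃ i : ℕ, Op (S m i) with hΩ₀def
  have hΩ₀ : ℙ Ω₀ᶜ = 0 := by
    rw [hΩ₀def, Set.compl_iInter]
    refine measure_iUnion_null fun m => ?_
    rw [Set.compl_iUnion]
    exact hGzero m
  -- the deterministic conclusion on Ω₀
  have hdet : ∀ a ∈ Ω₀, ∀ x y : X,
      (⨅ z : X, convR (percW μ (Y a)) z z) = convR μ x y := by
    intro a ha x y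
    have hperc_le : ∀ z, lsRoot (percW μ (Y a)) z z ≤ lsRoot μ x y := by
      intro z
      calc lsRoot (percW μ (Y a)) z z ≤ lsRoot μ z z := lsRoot_mono (percW_le μ (Y a)) z z
        _ = lsRoot μ x y := lsRoot_const hKtop hrows hconn z z x y
    have hlow : lsRoot μ x y ≤ ⨆ z, lsRoot (percW μ (Y a)) z z := by
      have hx0 : lsRoot μ x y = lsRoot μ x₀ x₀ := lsRoot_const hKtop hrows hconn x y x₀ x₀
      rw [hx0]
      refine le_trans (lsRoot_diag_le_iSup μ x₀) (iSup_le fun m => ?_)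
      have ham : a ∈ ⋃ i : ℕ, Op (S m i) := Set.mem_iInter.mp ha m
      obtain ⟨i, hai⟩ := Set.mem_iUnion.mp ham
      set yy := ym m i with hyydef
      have hcls : cl x₀ = cl yy := by
        have h1 : cl x₀ = c0 := hx₀
        have h2 : cl yy = c0 := hymC m i
        rw [h1, h2]
      obtain ⟨γ, hγ, hγinv⟩ := hcl x₀ yy hcls
      have hdiag : matPow μ (m + 1) yy yy = matPow μ (m + 1) x₀ x₀ := by
        rw [← hγ]; exact matPow_equiv γ hγinv (m + 1) x₀ x₀
      have hA : ∀ w, (∃ i ≤ m + 1, 0 < matPow μ i yy w) →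
          w ∈ (↑(ballWF hbg yy (m + 1)) : Set X) := by
        intro w hw
        exact Finset.mem_coe.mpr ((mem_ballWF hbg).mpr hw)
      have hres : matPow (restrictW μ (↑(ballWF hbg yy (m + 1)) : Set X)) (m + 1) yy yy
          = matPow μ (m + 1) yy yy := matPow_restrict_eq hA (m + 1) le_rfl yy
      have hopen : ∀ e : {e : Sym2 X // IsEdgeW μ e},
          (∀ v ∈ (e : Sym2 X), v ∈ (↑(ballWF hbg yy (m + 1)) : Set X)) → Y a e = true := by
        intro e he
        refine (hOpMem (S m i) a).mp hai e (mem_edgesIn.mpr fun v hv => ?_)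
        exact Finset.mem_coe.mp (he v hv)
      have hle : matPow μ (m + 1) x₀ x₀ ≤ matPow (percW μ (Y a)) (m + 1) yy yy := by
        rw [← hdiag, ← hres]
        exact matPow_mono (restrict_le_percW hopen) (m + 1) yy yy
      calc matPow μ (m + 1) x₀ x₀ ^ (((m + 1 : ℕ)) : ℝ)⁻¹
          ≤ matPow (percW μ (Y a)) (m + 1) yy yy ^ (((m + 1 : ℕ)) : ℝ)⁻¹ :=
            ENNReal.rpow_le_rpow hle (by positivity)
        _ ≤ lsRoot (percW μ (Y a)) yy yy := le_lsRoot_diag yy (Nat.succ_pos m)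
        _ ≤ ⨆ z, lsRoot (percW μ (Y a)) z z := le_iSup (fun z => lsRoot (percW μ (Y a)) z z) yy
    have hsup : (⨆ z, lsRoot (percW μ (Y a)) z z) = lsRoot μ x y :=
      le_antisymm (iSup_le hperc_le) hlow
    calc (⨅ z : X, convR (percW μ (Y a)) z z) = (⨆ z, lsRoot (percW μ (Y a)) z z)⁻¹ := by
          rw [ENNReal.inv_iSup]; rfl
      _ = convR μ x y := by rw [hsup]; rfl
  rw [Filter.eventually_iff, MeasureTheory.mem_ae_iff]
  apply measure_mono_null _ hΩ₀
  intro a ha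
  simp only [Set.mem_compl_iff, Set.mem_setOf_eq] at ha ⊢
  intro haΩ₀
  exact ha (hdet a haΩ₀)
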